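/- Let α ∈ (0,1]. Then ∑_{n=1}^{∞} e^{-αn}(αn)^{n-1}/n! = 1, i.e. the Borel(α) distribution is proper (places no mass at infinity) in the subcritical/critical case. -/

import Mathlib

open Real Filter fwdDiff

noncomputable def borelC (n : ℕ) : ℝ := (n : ℝ) ^ n / (n.factorial * n)

lemma borelC_zero : borelC 0 = 0 := by simp [borelC]

lemma borelC_one : borelC 1 = 1 := by norm_num [borelC]

lemma borelC_nonneg (n : ℕ) : 0 ≤ borelC n := by
  apply div_nonneg <;> positivity

lemma borelC_eq (n : ℕ) (hn : n ≠ 0) :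
    borelC n = (n : ℝ) ^ (n - 1) / n.factorial := by
  obtain ⟨m, rfl⟩ : ∃ m, n = m + 1 := ⟨n - 1, by omega⟩
  have h : ((m+1 : ℕ) : ℝ) ^ (m+1) = ((m+1 : ℕ) : ℝ) ^ (m + 1 - 1) * (m+1 : ℕ) := by
    rw [pow_succ]; norm_num
  have hn' : (0:ℝ) < ((m+1 : ℕ):ℝ) := by positivity
  rw [borelC, h]
  field_simp

lemma my_pow_div_factorial_le_exp (x : ℝ) (hx : 0 ≤ x) (n : ℕ) :
    x ^ n / n.factorial ≤ Real.exp x := by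
  calc x ^ n / n.factorial
      ≤ ∑ i ∈ Finset.range (n + 1), x ^ i / i.factorial := by
        refine Finset.single_le_sum (f := fun i => x ^ i / (i.factorial : ℝ)) ?_ ?_
        · intro i _; positivity
        · simp
    _ ≤ Real.exp x := Real.sum_le_exp_of_nonneg hx _

lemma borelC_le_exp (n : ℕ) : borelC n ≤ Real.exp 1 ^ n := by
  rcases Nat.eq_zero_or_pos n with h | h
  · subst h; simp [borelC_zero]
  · have hf : (0:ℝ) < n.factorial := by positivity
    have h1 : borelC n ≤ (n : ℝ) ^ n / n.factorial := by
      rw [borelC]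
      apply div_le_div_of_nonneg_left (by positivity) hf
      have : (1:ℝ) ≤ n := by exact_mod_cast h
      nlinarith
    have h2 : (n : ℝ) ^ n / n.factorial ≤ Real.exp n :=
      my_pow_div_factorial_le_exp _ (by positivity) n
    rw [Real.exp_one_pow]
    exact h1.trans h2


lemma summable_borelC_inv_e : Summable (fun n => borelC n * (Real.exp 1)⁻¹ ^ n) := by
  obtain ⟨a, ha0, ha⟩ := Stirling.stirlingSeq'_bounded_by_pos_constant
  have hg : Summable (fun n : ℕ => a⁻¹ * (1 / (n : ℝ) ^ (3/2 : ℝ))) :=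
    (Real.summable_one_div_nat_rpow.mpr (by norm_num)).mul_left _
  refine Summable.of_nonneg_of_le (fun n => mul_nonneg (borelC_nonneg n) (by positivity)) (fun n => ?_) hg
  rcases Nat.eq_zero_or_pos n with rfl | hn
  · simp [borelC, Real.zero_rpow (by norm_num : (3/2:ℝ) ≠ 0)]
  · obtain ⟨m, rfl⟩ : ∃ m, n = m + 1 := ⟨n - 1, by omega⟩
    set N := m + 1 with hN
    have hNpos : (0:ℝ) < N := by positivity
    have hsq2 : (0:ℝ) < Real.sqrt (2*N) := Real.sqrt_pos.mpr (by positivity)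
    have hsq : (0:ℝ) < Real.sqrt N := Real.sqrt_pos.mpr hNpos
    have hPpos : (0:ℝ) < ((N:ℝ)/Real.exp 1)^N := by positivity
    have hfac : a * (Real.sqrt (2*N) * ((N:ℝ)/Real.exp 1)^N) ≤ N.factorial := by
      have := ha m
      unfold Stirling.stirlingSeq at this
      rw [← hN] at this
      rw [le_div_iff₀ (by positivity)] at this
      calc a * (Real.sqrt (2*N) * ((N:ℝ)/Real.exp 1)^N)
          = a * (Real.sqrt (2*(N:ℕ)) * (((N:ℕ):ℝ)/Real.exp 1)^(N:ℕ)) := by push_cast; ring_nf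
        _ ≤ _ := this
    have hpow : ((N:ℝ)/Real.exp 1)^N = (N:ℝ)^N * ((Real.exp 1)⁻¹)^N := by
      rw [div_pow, div_eq_mul_inv, inv_pow]
    have hrpow : ((N:ℕ):ℝ) ^ (3/2 : ℝ) = (N:ℝ) * Real.sqrt N := by
      rw [show (3/2:ℝ) = 1 + 1/2 by norm_num, Real.rpow_add hNpos, Real.rpow_one,
        ← Real.sqrt_eq_rpow]
    have key : borelC N * (Real.exp 1)⁻¹ ^ N ≤ 1 / (a * (Real.sqrt (2*N) * N)) := by
      rw [borelC]
      rw [div_mul_eq_mul_div, div_le_div_iff₀ (by positivity) (by positivity)]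
      have h2 : a * (Real.sqrt (2*N) * ((N:ℝ)^N * ((Real.exp 1)⁻¹)^N)) ≤ N.factorial := by
        rw [← hpow]; exact hfac
      calc (N:ℝ)^N * ((Real.exp 1)⁻¹)^N * (a * (Real.sqrt (2*N) * N))
          = (a * (Real.sqrt (2*N) * ((N:ℝ)^N * ((Real.exp 1)⁻¹)^N))) * N := by ring
        _ ≤ (N.factorial : ℝ) * N := by
            apply mul_le_mul_of_nonneg_right h2 (le_of_lt hNpos)
        _ = 1 * ((N.factorial : ℝ) * N) := by ring
    refine key.trans ?_
    rw [hrpow, one_div, one_div, mul_comm (a⁻¹), ← mul_inv]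
    apply inv_anti₀ (by positivity)
    calc (N:ℝ) * Real.sqrt N * a
        = a * (Real.sqrt N * N) := by ring
      _ ≤ a * (Real.sqrt (2*N) * N) := by
          apply mul_le_mul_of_nonneg_left ?_ (le_of_lt ha0)
          apply mul_le_mul_of_nonneg_right (Real.sqrt_le_sqrt (by linarith)) (le_of_lt hNpos)

lemma fwdDiff_cast_pow (j : ℕ) :
    Δ_[1] (fun k : ℕ => (k:ℝ)^j)
      = ∑ i ∈ Finset.range j, (j.choose i : ℝ) • (fun k : ℕ => (k:ℝ)^i) := by
  funext k
  simp only [fwdDiff, Finset.sum_apply, Pi.smul_apply, smul_eq_mul]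
  push_cast
  rw [add_pow]
  rw [Finset.sum_range_succ]
  simp [mul_comm]

lemma fwdDiff_pow_eq_zero (j : ℕ) : ∀ N : ℕ, j < N →
    (fwdDiff 1)^[N] (fun k : ℕ => (k:ℝ)^j) = 0 := by
  induction j using Nat.strong_induction_on with
  | _ j IH =>
    intro N hN
    obtain ⟨N', rfl⟩ : ∃ N', N = N' + 1 := ⟨N - 1, by omega⟩
    rw [Function.iterate_succ_apply, fwdDiff_cast_pow, fwdDiff_iter_finset_sum]
    refine Finset.sum_eq_zero fun i hi => ?_
    rw [fwdDiff_iter_const_smul, IH i (Finset.mem_range.mp hi) N'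
      (by have := Finset.mem_range.mp hi; omega), smul_zero]

lemma alt_sum_pow (N j : ℕ) (h : j < N) :
    ∑ k ∈ Finset.range (N+1), (-1:ℝ)^(N-k) * (N.choose k) * (k:ℝ)^j = 0 := by
  have H := fwdDiff_iter_eq_sum_shift (1:ℕ) (fun k : ℕ => (k:ℝ)^j) N 0
  rw [fwdDiff_pow_eq_zero j N h] at H
  simp only [Pi.zero_apply, zero_add, smul_eq_mul, zsmul_eq_mul] at H
  rw [eq_comm] at H
  rw [← H]
  apply Finset.sum_congr rfl
  intro k _
  push_cast
  ring

noncomputable def borelF (x : ℝ) (q : ℕ × ℕ) : ℝ :=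
  borelC q.1 * (-(q.1:ℝ))^q.2 * x^(q.1+q.2) / (q.2.factorial)

lemma borelF_antidiag_sum (x : ℝ) (N : ℕ) :
    ∑ p ∈ Finset.HasAntidiagonal.antidiagonal N, borelF x p = if N = 1 then x else 0 := by
  rw [Finset.Nat.sum_antidiagonal_eq_sum_range_succ_mk]
  match N with
  | 0 => simp [borelF, borelC]
  | 1 =>
    rw [Finset.sum_range_succ, Finset.sum_range_succ]
    norm_num [borelF, borelC]
  | (M+2) =>
    set N := M + 2 with hN
    rw [if_neg (by omega)]
    have key := alt_sum_pow N (N-1) (by omega)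
    have hterm : ∀ k ∈ Finset.range (N+1), borelF x (k, N - k)
        = ((-1:ℝ)^(N-k) * (N.choose k) * (k:ℝ)^(N-1)) * (x^N / N.factorial) := by
      intro k hk
      have hkN : k ≤ N := by have := Finset.mem_range.mp hk; omega
      rcases Nat.eq_zero_or_pos k with rfl | hkpos
      · simp [borelF, borelC, zero_pow (show N - 1 ≠ 0 by omega)]
      · have hkadd : k + (N - k) = N := by omega
        have hchoose : ((N.choose k : ℝ) * k.factorial * (N-k).factorial) = N.factorial := by
          exact_mod_cast congrArg (Nat.cast (R := ℝ))
            (Nat.choose_mul_factorial_mul_factorial hkN)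
        have hpowk : (k:ℝ)^(k-1) * (k:ℝ)^(N-k) = (k:ℝ)^(N-1) := by
          rw [← pow_add]; congr 1; omega
        have hCk : borelC k = (k:ℝ)^(k-1) / k.factorial := borelC_eq k (by omega)
        rw [borelF, hCk]
        simp only [hkadd]
        rw [neg_pow]
        have hfk : (k.factorial : ℝ) ≠ 0 := by positivity
        have hfNk : ((N-k).factorial : ℝ) ≠ 0 := by positivity
        have hfN : (N.factorial : ℝ) ≠ 0 := by positivity
        rw [show N - 1 = M + 1 from by omega] at hpowk
        field_simp
        rw [← hchoose, show N - 1 = M + 1 from by omega, ← hpowk]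
        ring
    rw [Finset.sum_congr rfl hterm, ← Finset.sum_mul, key, zero_mul]

lemma tsum_pow_div_factorial (y : ℝ) :
    ∑' m : ℕ, y ^ m / m.factorial = Real.exp y := by
  rw [Real.exp_eq_exp_ℝ, NormedSpace.exp_eq_tsum_div]

lemma abs_borelF (x : ℝ) (hx0 : 0 < x) (n m : ℕ) :
    |borelF x (n, m)| = (borelC n * x ^ n) * (((n:ℝ) * x) ^ m / m.factorial) := by
  rw [borelF]
  rw [abs_div, abs_mul, abs_mul, abs_pow, abs_pow, abs_neg, Nat.abs_cast,
    abs_of_nonneg (borelC_nonneg n), abs_of_nonneg hx0.le, Nat.abs_cast, mul_pow, pow_add]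
  ring

lemma summable_abs_borelF {x : ℝ} (hx0 : 0 < x) (hq : x * Real.exp x * Real.exp 1 < 1) :
    Summable (fun q : ℕ × ℕ => |borelF x q|) := by
  rw [summable_prod_of_nonneg (fun q => abs_nonneg _)]
  constructor
  · intro n
    simp_rw [abs_borelF x hx0]
    exact (Real.summable_pow_div_factorial _).mul_left _
  · have hre : ∀ n : ℕ, ∑' m : ℕ, |borelF x (n, m)|
        = borelC n * x ^ n * Real.exp (n * x) := by
      intro n
      simp_rw [abs_borelF x hx0]
      rw [tsum_mul_left, tsum_pow_div_factorial]
    simp_rw [hre]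
    refine Summable.of_nonneg_of_le (fun n => mul_nonneg (mul_nonneg (borelC_nonneg n)
        (by positivity)) (Real.exp_pos _).le) (fun n => ?_)
      (summable_geometric_of_lt_one (by positivity) hq)
    have h1 : Real.exp ((n:ℕ) * x) = Real.exp x ^ n := Real.exp_nat_mul x n
    rw [h1]
    calc borelC n * x ^ n * Real.exp x ^ n
        ≤ Real.exp 1 ^ n * x ^ n * Real.exp x ^ n := by
          apply mul_le_mul_of_nonneg_right ?_ (by positivity)
          exact mul_le_mul_of_nonneg_right (borelC_le_exp n) (by positivity)
      _ = (x * Real.exp x * Real.exp 1) ^ n := by rw [← mul_pow, ← mul_pow]; ring_nf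
lemma borelF_eq (x : ℝ) (n m : ℕ) :
    borelF x (n, m) = (borelC n * x ^ n) * ((-((n:ℝ) * x)) ^ m / m.factorial) := by
  rw [borelF]
  have h : (-((n:ℝ) * x)) ^ m = (-(n:ℝ)) ^ m * x ^ m := by rw [← neg_mul, mul_pow]
  rw [h, pow_add]
  ring

lemma borel_sum_small {x : ℝ} (hx0 : 0 < x) (hq : x * Real.exp x * Real.exp 1 < 1) :
    ∑' n : ℕ, borelC n * (x * Real.exp (-x)) ^ n = x := by
  have hA := summable_abs_borelF hx0 hq
  have hF : Summable (borelF x) := Summable.of_abs hA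
  have hfiber : ∀ n : ℕ, Summable fun m => borelF x (n, m) := fun n =>
    (((summable_prod_of_nonneg (fun q => abs_nonneg _)).mp hA).1 n).of_abs
  have h1 : ∑' q : ℕ × ℕ, borelF x q = ∑' (n : ℕ) (m : ℕ), borelF x (n, m) :=
    Summable.tsum_prod' hF hfiber
  have h2 : ∀ n : ℕ, ∑' m : ℕ, borelF x (n, m) = borelC n * (x * Real.exp (-x)) ^ n := by
    intro n
    simp_rw [borelF_eq x n, tsum_mul_left, tsum_pow_div_factorial]
    rw [show -((n:ℝ) * x) = (n:ℕ) * (-x) by ring, Real.exp_nat_mul, mul_pow]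
    ring
  have hFs : Summable (borelF x ∘ Finset.HasAntidiagonal.sigmaAntidiagonalEquivProd (A := ℕ)) :=
    (Finset.HasAntidiagonal.sigmaAntidiagonalEquivProd (A := ℕ)).summable_iff.mpr hF
  have h3 : ∑' q : ℕ × ℕ, borelF x q
      = ∑' (N : ℕ) (p : {p // p ∈ Finset.HasAntidiagonal.antidiagonal N}), borelF x ↑p := by
    rw [← (Finset.HasAntidiagonal.sigmaAntidiagonalEquivProd (A := ℕ)).tsum_eq (borelF x)]
    exact Summable.tsum_sigma hFs
  have h4 : ∀ N : ℕ, ∑' (p : {p // p ∈ Finset.HasAntidiagonal.antidiagonal N}), borelF x ↑p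
      = if N = 1 then x else 0 := by
    intro N
    rw [Finset.tsum_subtype]
    exact borelF_antidiag_sum x N
  calc ∑' n : ℕ, borelC n * (x * Real.exp (-x)) ^ n
      = ∑' (n : ℕ) (m : ℕ), borelF x (n, m) := by
        exact (tsum_congr h2).symm
    _ = ∑' q : ℕ × ℕ, borelF x q := h1.symm
    _ = ∑' N : ℕ, (if N = 1 then x else 0) := by
        rw [h3]; exact tsum_congr h4
    _ = x := by rw [tsum_eq_single 1 (fun N hN => if_neg hN)]; simp

lemma g_le_inv_e (t : ℝ) (ht : 0 ≤ t) : t * Real.exp (-t) ≤ (Real.exp 1)⁻¹ := by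
  have h1 : t ≤ Real.exp (t - 1) := by
    have := Real.add_one_le_exp (t - 1)
    linarith
  calc t * Real.exp (-t) ≤ Real.exp (t - 1) * Real.exp (-t) :=
        mul_le_mul_of_nonneg_right h1 (Real.exp_pos _).le
    _ = (Real.exp 1)⁻¹ := by rw [← Real.exp_add, ← Real.exp_neg]; congr 1; ring

lemma g_lt_inv_e (t : ℝ) (ht : t ≠ 1) : t * Real.exp (-t) < (Real.exp 1)⁻¹ := by
  have h1 : t < Real.exp (t - 1) := by
    have := Real.add_one_lt_exp (show t - 1 ≠ 0 by intro h; exact ht (by linarith))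
    linarith
  calc t * Real.exp (-t) < Real.exp (t - 1) * Real.exp (-t) :=
        mul_lt_mul_of_pos_right h1 (Real.exp_pos _)
    _ = (Real.exp 1)⁻¹ := by rw [← Real.exp_add, ← Real.exp_neg]; congr 1; ring

lemma borel_sum_eq_powerSeries_sum (y : ℝ) :
    (FormalMultilinearSeries.ofScalars ℝ borelC).sum y = ∑' n : ℕ, borelC n * y ^ n := by
  rw [FormalMultilinearSeries.sum]
  exact tsum_congr fun n => by
    rw [FormalMultilinearSeries.ofScalars_apply_eq]; exact smul_eq_mul ..

lemma borel_eqOn_Ioo : ∀ x ∈ Set.Ioo (0:ℝ) 1,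
    (∑' n : ℕ, borelC n * (x * Real.exp (-x)) ^ n) = x := by
  set p := FormalMultilinearSeries.ofScalars ℝ borelC with hp
  set r₀ : NNReal := ⟨(Real.exp 1)⁻¹, by positivity⟩ with hr₀
  have hsn : Summable fun n => ‖p n‖ * (r₀ : ℝ) ^ n := by
    have : ∀ n, ‖p n‖ * (r₀ : ℝ) ^ n = borelC n * (Real.exp 1)⁻¹ ^ n := by
      intro n
      rw [hp, FormalMultilinearSeries.ofScalars_norm, Real.norm_eq_abs,
        abs_of_nonneg (borelC_nonneg n)]
      rfl
    simp_rw [this]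
    exact summable_borelC_inv_e
  have hle : (r₀ : ENNReal) ≤ p.radius := p.le_radius_of_summable_norm hsn
  have hrad : 0 < p.radius := by
    have h0 : (0:NNReal) < r₀ := by
      rw [← NNReal.coe_lt_coe]
      show (0:ℝ) < (Real.exp 1)⁻¹
      positivity
    have h1 : ((0:NNReal) : ENNReal) < (r₀ : ENNReal) := ENNReal.coe_lt_coe.mpr h0
    simpa using lt_of_lt_of_le h1 hle
  have hball := p.hasFPowerSeriesOnBall hrad
  have hgana : ∀ x : ℝ, AnalyticAt ℝ (fun t : ℝ => t * Real.exp (-t)) x := by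
    intro x
    exact analyticAt_id.mul (analyticAt_rexp.comp analyticAt_id.neg)
  have hcomp : (fun x : ℝ => ∑' n : ℕ, borelC n * (x * Real.exp (-x)) ^ n)
      = p.sum ∘ (fun t : ℝ => t * Real.exp (-t)) := by
    funext t
    exact (borel_sum_eq_powerSeries_sum (t * Real.exp (-t))).symm
  have hf_ana : AnalyticOnNhd ℝ
      (fun x : ℝ => ∑' n : ℕ, borelC n * (x * Real.exp (-x)) ^ n) (Set.Ioo 0 1) := by
    intro x hx
    rw [hcomp]
    refine AnalyticAt.comp ?_ (hgana x)
    refine hball.analyticAt_of_mem ?_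
    rw [EMetric.mem_ball, edist_dist, Real.dist_eq, sub_zero]
    refine lt_of_lt_of_le ?_ hle
    have habs : |x * Real.exp (-x)| < (Real.exp 1)⁻¹ := by
      rw [abs_of_nonneg (mul_nonneg hx.1.le (Real.exp_pos _).le)]
      exact g_lt_inv_e x (ne_of_lt hx.2)
    rw [← ENNReal.ofReal_coe_nnreal]
    refine (ENNReal.ofReal_lt_ofReal_iff (show (0:ℝ) < (r₀:ℝ) by
      show (0:ℝ) < (Real.exp 1)⁻¹; positivity)).mpr ?_
    exact habs
  have hid_ana : AnalyticOnNhd ℝ (fun x : ℝ => x) (Set.Ioo (0:ℝ) 1) :=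
    fun x _ => analyticAt_id
  have hev : (fun x : ℝ => ∑' n : ℕ, borelC n * (x * Real.exp (-x)) ^ n)
      =ᶠ[nhds (16⁻¹ : ℝ)] (fun x : ℝ => x) := by
    have hmem : Set.Ioo (0:ℝ) (8⁻¹) ∈ nhds (16⁻¹ : ℝ) := Ioo_mem_nhds (by norm_num) (by norm_num)
    filter_upwards [hmem] with t ht
    refine borel_sum_small ht.1 ?_
    have h1 : Real.exp t < Real.exp 1 := Real.exp_lt_exp.mpr (by
      have := ht.2; norm_num at this ⊢; linarith)
    have h2 : (0:ℝ) < Real.exp t := Real.exp_pos t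
    have he : Real.exp 1 < 2.7182818286 := Real.exp_one_lt_d9
    have ht2 : t < 8⁻¹ := ht.2
    have ht1 : 0 < t := ht.1
    have he1 : (0:ℝ) < Real.exp 1 := Real.exp_pos 1
    calc t * Real.exp t * Real.exp 1
        < t * Real.exp 1 * Real.exp 1 :=
          mul_lt_mul_of_pos_right (mul_lt_mul_of_pos_left h1 ht1) he1
      _ < 8⁻¹ * Real.exp 1 * Real.exp 1 := by
          apply mul_lt_mul_of_pos_right (mul_lt_mul_of_pos_right ht2 he1) he1
      _ < 8⁻¹ * 2.7182818286 * 2.7182818286 := by nlinarith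
      _ < 1 := by norm_num
  have := AnalyticOnNhd.eqOn_of_preconnected_of_eventuallyEq hf_ana hid_ana
    isPreconnected_Ioo (show (16⁻¹:ℝ) ∈ Set.Ioo (0:ℝ) 1 by norm_num) hev
  exact fun x hx => this hx

lemma borel_eval (x : ℝ) (hx0 : 0 < x) (hx1 : x ≤ 1) :
    (∑' n : ℕ, borelC n * (x * Real.exp (-x)) ^ n) = x := by
  rcases lt_or_eq_of_le hx1 with h | rfl
  · exact borel_eqOn_Ioo x ⟨hx0, h⟩
  · -- x = 1 : continuity argument
    set f : ℝ → ℝ := fun t => ∑' n : ℕ, borelC n * (t * Real.exp (-t)) ^ n with hf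
    have hcont : ContinuousOn f (Set.Icc (0:ℝ) 1) := by
      rw [continuousOn_iff_continuous_restrict]
      have : (Set.Icc (0:ℝ) 1).domRestrict f
          = fun t : ↥(Set.Icc (0:ℝ) 1) =>
            ∑' n : ℕ, borelC n * ((t:ℝ) * Real.exp (-(t:ℝ))) ^ n := rfl
      rw [this]
      refine continuous_tsum (u := fun n => borelC n * ((Real.exp 1)⁻¹) ^ n) ?_
        summable_borelC_inv_e ?_
      · intro i
        refine continuous_const.mul (Continuous.pow ?_ i)
        exact continuous_subtype_val.mul (Real.continuous_exp.comp continuous_subtype_val.neg)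
      · intro n t
        have ht0 : (0:ℝ) ≤ (t:ℝ) := t.2.1
        have hg0 : (0:ℝ) ≤ (t:ℝ) * Real.exp (-(t:ℝ)) :=
          mul_nonneg ht0 (Real.exp_pos _).le
        rw [Real.norm_eq_abs, abs_mul, abs_of_nonneg (borelC_nonneg n), abs_pow,
          abs_of_nonneg hg0]
        refine mul_le_mul_of_nonneg_left ?_ (borelC_nonneg n)
        exact pow_le_pow_left₀ hg0 (g_le_inv_e _ ht0) n
    have h1 : Filter.Tendsto f (nhdsWithin 1 (Set.Ioo (0:ℝ) 1)) (nhds (f 1)) := by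
      have := (hcont 1 (by constructor <;> norm_num)).tendsto
      exact this.mono_left (nhdsWithin_mono _ Set.Ioo_subset_Icc_self)
    have hne : (nhdsWithin (1:ℝ) (Set.Ioo (0:ℝ) 1)).NeBot := by
      rw [← mem_closure_iff_nhdsWithin_neBot, closure_Ioo (by norm_num : (0:ℝ) ≠ 1)]
      constructor <;> norm_num
    have h2 : Filter.Tendsto f (nhdsWithin 1 (Set.Ioo (0:ℝ) 1)) (nhds 1) := by
      have hid : Filter.Tendsto (fun t : ℝ => t) (nhdsWithin 1 (Set.Ioo (0:ℝ) 1)) (nhds 1) :=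
        Filter.tendsto_id.mono_left nhdsWithin_le_nhds
      refine hid.congr' ?_
      filter_upwards [self_mem_nhdsWithin] with t ht
      exact (borel_eqOn_Ioo t ht).symm
    exact tendsto_nhds_unique h1 h2

theorem borel_total_mass_subcritical
    (α : ℝ) (hα0 : 0 < α) (hα1 : α ≤ 1) :
    ∑' n : ℕ, Real.exp (-(α * (n + 1))) * (α * (n + 1)) ^ n / (Nat.factorial (n + 1) : ℝ) = 1 := by
  have hy0 : 0 ≤ α * Real.exp (-α) := mul_nonneg hα0.le (Real.exp_pos _).le
  have hterm : ∀ n : ℕ,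
      Real.exp (-(α * (n + 1))) * (α * (n + 1)) ^ n / (Nat.factorial (n + 1) : ℝ)
        = borelC (n+1) * (α * Real.exp (-α)) ^ (n+1) / α := by
    intro n
    have hC : borelC (n+1) = ((n+1 : ℕ) : ℝ) ^ n / (n+1).factorial := by
      rw [borelC_eq (n+1) (by omega)]
      norm_num
    rw [hC]
    have hexp : Real.exp (-α) ^ (n+1) = Real.exp (-(α * (n + 1))) := by
      rw [← Real.exp_nat_mul]
      congr 1
      push_cast
      ring
    rw [← hexp, mul_pow α ((n:ℝ)+1) n, mul_pow α (Real.exp (-α)) (n+1)]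
    have hfa : ((n+1).factorial : ℝ) ≠ 0 := by positivity
    field_simp
    push_cast
    ring
  rw [tsum_congr hterm]
  have hsumm : Summable (fun n : ℕ => borelC n * (α * Real.exp (-α)) ^ n) := by
    refine Summable.of_nonneg_of_le
      (fun n => mul_nonneg (borelC_nonneg n) (pow_nonneg hy0 n)) (fun n => ?_)
      summable_borelC_inv_e
    exact mul_le_mul_of_nonneg_left
      (pow_le_pow_left₀ hy0 (g_le_inv_e α hα0.le) n) (borelC_nonneg n)
  have hshift : ∑' n : ℕ, borelC (n+1) * (α * Real.exp (-α)) ^ (n+1) = α := by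
    have h0 := Summable.tsum_eq_zero_add hsumm
    rw [borel_eval α hα0 hα1] at h0
    rw [borelC_zero] at h0
    simpa using h0.symm
  rw [tsum_div_const, hshift, div_self hα0.ne']
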